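/- For any three-player impartial game G, the sum G + G + G is never an N-game (the first player cannot win the threefold sum of a game with itself). -/

import Mathlib

/-- Three-player impartial games: well-founded game trees. -/
inductive G3 : Type 1 where
  | mk : (ι : Type) → (ι → G3) → G3

namespace G3

/-- The index type of options (moves) of a game. -/
def moves : G3 → Type
  | mk ι _ => ι

/-- The option of a game corresponding to a move. -/
def moveFn : (g : G3) → moves g → G3
  | mk _ f => f

/-- Disjunctive sum: move in exactly one component. -/
noncomputable def add : G3 → G3 → G3 :=
  G3.rec (fun ι f ihf =>
    G3.rec (fun κ g ihg =>
      mk (ι ⊕ κ) (fun x =>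
        match x with
        | Sum.inl i => ihf i (mk κ g)
        | Sum.inr j => ihg j)))

/-- The four outcome types of a three-player impartial game. -/
inductive PType : Type
  | N | O | P | Q
deriving DecidableEq

open Classical in
/-- The type of a game: `N` iff some option is a `P`-game; `O` iff it has at least
one option and all options are `N`-games; `P` iff all options are `O`-games;
`Q` otherwise. -/
noncomputable def typ : G3 → PType
  | mk ι f =>
    if ∃ i, typ (f i) = PType.P then PType.N
    else if Nonempty ι ∧ ∀ i, typ (f i) = PType.N then PType.O
    else if ∀ i, typ (f i) = PType.O then PType.P
    else PType.Q

/-- The Nim heap of size `n`: options are heaps of sizes `0, …, n-1`. -/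
def nim : ℕ → G3
  | n => mk (Fin n) (fun i => nim i)
termination_by n => n
decreasing_by exact i.isLt

/-- The sum of `n` Nim heaps of size 1. -/
noncomputable def ones : ℕ → G3
  | 0 => nim 0
  | n + 1 => add (ones n) (nim 1)

lemma not_N_of (g : G3) (h : ∀ i, typ (moveFn g i) ≠ PType.P) : typ g ≠ PType.N := by
  cases g with
  | mk ι f =>
    rw [typ]
    rw [if_neg (by push_neg; exact h)]
    split <;> [decide; skip]
    split <;> decide

lemma not_O_of (g : G3) (i : moves g) (h : typ (moveFn g i) ≠ PType.N) :
    typ g ≠ PType.O := by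
  cases g with
  | mk ι f =>
    rw [typ]
    split <;> [decide; skip]
    rw [if_neg (by rintro ⟨-, h2⟩; exact h (h2 i))]
    split <;> decide

lemma not_P_of (g : G3) (i : moves g) (h : typ (moveFn g i) ≠ PType.O) :
    typ g ≠ PType.P := by
  cases g with
  | mk ι f =>
    rw [typ]
    split <;> [decide; skip]
    split <;> [decide; skip]
    rw [if_neg (fun h2 => h (h2 i))]
    decide

lemma addMoveL (a b : G3) (i : moves a) :
    ∃ x : moves (add a b), moveFn (add a b) x = add (moveFn a i) b := by
  cases a; cases b; exact ⟨Sum.inl i, rfl⟩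

lemma addMoveR (a b : G3) (j : moves b) :
    ∃ x : moves (add a b), moveFn (add a b) x = add a (moveFn b j) := by
  cases a; cases b; exact ⟨Sum.inr j, rfl⟩

lemma addMoveCases (a b : G3) (x : moves (add a b)) :
    (∃ i, moveFn (add a b) x = add (moveFn a i) b) ∨
    (∃ j, moveFn (add a b) x = add a (moveFn b j)) := by
  cases a; cases b
  rcases x with i | j
  · exact Or.inl ⟨i, rfl⟩
  · exact Or.inr ⟨j, rfl⟩

/-- If `a+a+a` is not an N-game, then `(a+a)+b` is not an O-game:
the coalition can move `b` is not needed; the witness non-N option is `a+a+a`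
obtained by moving `b` to ... actually by moving in `b`?  No: witness is
`(a+a)+a` itself when `b` has a move to `a`.  We instead phrase it with an
explicit option. -/
lemma notO_left (a b : G3) (j : moves b) (hj : moveFn b j = a)
    (h : typ (add (add a a) a) ≠ PType.N) : typ (add (add a a) b) ≠ PType.O := by
  obtain ⟨x, hx⟩ := addMoveR (add a a) b j
  rw [hj] at hx
  exact not_O_of _ x (hx ▸ h)

lemma notO_mid (a b : G3) (j : moves b) (hj : moveFn b j = a)
    (h : typ (add (add a a) a) ≠ PType.N) : typ (add (add a b) a) ≠ PType.O := by
  obtain ⟨y, hy⟩ := addMoveR a b j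
  obtain ⟨x, hx⟩ := addMoveL (add a b) a y
  rw [hy, hj] at hx
  exact not_O_of _ x (hx ▸ h)

theorem treble_not_N (G : G3) : typ (add (add G G) G) ≠ PType.N := by
  induction G with
  | mk ι f ih =>
    set g : G3 := mk ι f with hg
    have hmove : ∀ i : ι, moveFn g i = f i := fun i => rfl
    apply not_N_of
    intro x
    rcases addMoveCases (add g g) g x with ⟨y, hy⟩ | ⟨i, hi⟩
    · rw [hy]
      rcases addMoveCases g g y with ⟨i, hi⟩ | ⟨i, hi⟩
      · rw [hi, hmove i]
        -- option is (f i + g) + g : find non-O option (f i + f i) + g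
        obtain ⟨z, hz⟩ := addMoveR (f i) g i
        obtain ⟨w, hw⟩ := addMoveL (add (f i) g) g z
        rw [hz, hmove i] at hw
        apply not_P_of _ w
        rw [hw]
        exact notO_left (f i) g i (hmove i) (ih i)
      · rw [hi, hmove i]
        -- option is (g + f i) + g : find non-O option (f i + f i) + g
        obtain ⟨z, hz⟩ := addMoveL g (f i) i
        obtain ⟨w, hw⟩ := addMoveL (add g (f i)) g z
        rw [hz, hmove i] at hw
        apply not_P_of _ w
        rw [hw]
        exact notO_left (f i) g i (hmove i) (ih i)
    · rw [hi, hmove i]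
      -- option is (g + g) + f i : find non-O option (f i + g) + f i
      obtain ⟨z, hz⟩ := addMoveL g g i
      obtain ⟨w, hw⟩ := addMoveL (add g g) (f i) z
      rw [hz, hmove i] at hw
      apply not_P_of _ w
      rw [hw]
      exact notO_mid (f i) g i (hmove i) (ih i)

end G3
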